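/- Let D be a real symmetric n×n matrix with spectral decomposition D = Σ_{r=1}^m λ_r E_r. Then the time-averaged mixing matrix of the continuous quantum walk, M̂_C := lim_{T→∞} (1/T) ∫_0^T exp(itD) ∘ exp(−itD) dt, equals Σ_{r=1}^m E_r ∘ E_r (the sum of the entrywise squares of the spectral idempotents). -/

import Mathlib

set_option maxHeartbeats 1000000

open Matrix BigOperators Filter

section Aux
variable {n m : ℕ}

lemma pow_spectral (P : Fin m → Matrix (Fin n) (Fin n) ℂ)
    (horth : ∀ r s, r ≠ s → P r * P s = 0)
    (hidem : ∀ r, P r * P r = P r)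
    (hsum : ∑ r, P r = 1)
    (a : Fin m → ℂ) (k : ℕ) :
    (∑ r, a r • P r) ^ k = ∑ r, (a r ^ k) • P r := by
  induction k with
  | zero => simpa using hsum.symm
  | succ k ih =>
    rw [pow_succ, ih, Finset.sum_mul]
    refine Finset.sum_congr rfl fun r _ => ?_
    rw [Finset.mul_sum]
    rw [Finset.sum_eq_single r]
    · rw [smul_mul_smul_comm, hidem r, pow_succ]
    · intro s _ hs
      rw [smul_mul_smul_comm, horth r s (Ne.symm hs), smul_zero]
    · intro h; exact absurd (Finset.mem_univ r) h

lemma exp_spectral (P : Fin m → Matrix (Fin n) (Fin n) ℂ)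
    (horth : ∀ r s, r ≠ s → P r * P s = 0)
    (hidem : ∀ r, P r * P r = P r)
    (hsum : ∑ r, P r = 1)
    (a : Fin m → ℂ) :
    NormedSpace.exp (∑ r, a r • P r) = ∑ r, Complex.exp (a r) • P r := by
  rw [NormedSpace.exp_eq_tsum (𝕂 := ℂ)]
  have h1 : ∀ k : ℕ, ((k.factorial : ℂ)⁻¹) • (∑ r, a r • P r) ^ k
      = ∑ r, (((k.factorial : ℂ)⁻¹) * a r ^ k) • P r := by
    intro k
    rw [pow_spectral P horth hidem hsum a k, Finset.smul_sum]
    simp [smul_smul]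
  have hsmm : ∀ z : ℂ, Summable fun k : ℕ => ((k.factorial : ℂ)⁻¹) * z ^ k := fun z => by
    simpa [smul_eq_mul] using NormedSpace.expSeries_summable' (𝕂 := ℂ) z
  simp only [h1]
  rw [Summable.tsum_finsetSum (fun r _ => (hsmm (a r)).smul_const (P r))]
  refine Finset.sum_congr rfl fun r _ => ?_
  rw [Summable.tsum_smul_const (hsmm (a r))]
  congr 1
  rw [Complex.exp_eq_exp_ℂ, NormedSpace.exp_eq_tsum (𝕂 := ℂ)]
  simp [smul_eq_mul]

lemma integral_double_sum {m : ℕ} (c w : Fin m → Fin m → ℂ) (T : ℝ) :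
    (∫ t in (0:ℝ)..T, ∑ r, ∑ s, Complex.exp (c r s * t) * w r s)
      = ∑ r, ∑ s, (∫ t in (0:ℝ)..T, Complex.exp (c r s * t)) * w r s := by
  have hci : ∀ (a b : ℂ), IntervalIntegrable (fun t : ℝ => Complex.exp (a * t) * b)
      MeasureTheory.volume 0 T := by
    intro a b
    have : Continuous fun t : ℝ => Complex.exp (a * t) * b :=
      ((continuous_const.mul Complex.continuous_ofReal).cexp).mul continuous_const
    exact this.intervalIntegrable _ _
  have h1 : ∀ r : Fin m, IntervalIntegrable (fun t : ℝ => ∑ s, Complex.exp (c r s * t) * w r s)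
      MeasureTheory.volume 0 T := by
    intro r
    have := IntervalIntegrable.sum (f := fun s (t : ℝ) => Complex.exp (c r s * t) * w r s)
      Finset.univ (fun s _ => hci _ _)
    rw [Finset.sum_fn] at this
    exact this
  rw [intervalIntegral.integral_finset_sum (f := fun r (t : ℝ) => ∑ s, Complex.exp (c r s * t) * w r s)
    (fun r _ => h1 r)]
  refine Finset.sum_congr rfl fun r _ => ?_
  rw [intervalIntegral.integral_finset_sum (f := fun s (t : ℝ) => Complex.exp (c r s * t) * w r s)
    (fun s _ => hci _ _)]
  exact Finset.sum_congr rfl fun s _ => intervalIntegral.integral_mul_const _ _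

end Aux

theorem continuous_walk_average_mixing
    (n m : ℕ)
    (D : Matrix (Fin n) (Fin n) ℝ)
    (hDsymm : D.IsSymm)
    (lam : Fin m → ℝ)
    (hlam_inj : Function.Injective lam)
    (E : Fin m → Matrix (Fin n) (Fin n) ℝ)
    (hdecomp : D = ∑ r, lam r • E r)
    (horth : ∀ r s, r ≠ s → E r * E s = 0)
    (hidem : ∀ r, E r * E r = E r)
    (hsymm : ∀ r, (E r).IsSymm)
    (hsum : ∑ r, E r = 1) :
    ∀ x y : Fin n,
      Tendsto
        (fun T : ℝ => (1 / T) *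
          ∫ t in (0:ℝ)..T,
            (NormedSpace.exp ((t * Complex.I) • D.map Complex.ofReal) x y) *
            (NormedSpace.exp ((-(t * Complex.I)) • D.map Complex.ofReal) x y))
        atTop
        (nhds ((((∑ r, (E r).hadamard (E r)) x y : ℝ) : ℂ))) := by
  intro x y
  set P : Fin m → Matrix (Fin n) (Fin n) ℂ := fun r => (E r).map Complex.ofReal with hP
  have hmap : ∀ A B : Matrix (Fin n) (Fin n) ℝ,
      (A * B).map Complex.ofReal = A.map Complex.ofReal * B.map Complex.ofReal := by
    intro A B
    exact Matrix.map_mul (f := Complex.ofRealHom)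
  have hPorth : ∀ r s, r ≠ s → P r * P s = 0 := by
    intro r s h
    rw [hP]; simp only [← hmap, horth r s h]; simp
  have hPidem : ∀ r, P r * P r = P r := by
    intro r; rw [hP]; simp only [← hmap, hidem r]
  have hPsum : ∑ r, P r = 1 := by
    rw [hP]
    ext i j
    have := congrFun (congrFun (congrArg (fun M => M.map Complex.ofReal) hsum) i) j
    simp only [Matrix.map_apply, Matrix.sum_apply] at this ⊢
    rw [Complex.ofReal_sum] at this
    simpa [Matrix.one_apply, apply_ite] using this
  -- decomposition of c • D.map ofReal
  have hD' : ∀ c : ℂ, c • D.map Complex.ofReal = ∑ r, (c * lam r) • P r := by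
    intro c
    have : D.map Complex.ofReal = ∑ r, (lam r : ℂ) • P r := by
      rw [hdecomp]
      ext i j
      simp [Matrix.map_apply, Matrix.sum_apply, hP]
    rw [this, Finset.smul_sum]
    refine Finset.sum_congr rfl fun r _ => ?_
    rw [smul_smul]
  have hexp : ∀ c : ℂ, NormedSpace.exp (c • D.map Complex.ofReal) x y
      = ∑ r, Complex.exp (c * lam r) * ((E r x y : ℝ) : ℂ) := by
    intro c
    rw [hD' c, exp_spectral P hPorth hPidem hPsum]
    simp [Matrix.sum_apply, hP, Matrix.map_apply, smul_eq_mul]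
  -- rewrite integrand
  have hint : ∀ t : ℝ,
      (NormedSpace.exp ((t * Complex.I) • D.map Complex.ofReal) x y) *
      (NormedSpace.exp ((-(t * Complex.I)) • D.map Complex.ofReal) x y)
      = ∑ r, ∑ s, Complex.exp ((Complex.I * (lam r - lam s)) * t) *
          (((E r x y : ℝ) : ℂ) * ((E s x y : ℝ) : ℂ)) := by
    intro t
    rw [hexp, hexp, Finset.sum_mul_sum]
    refine Finset.sum_congr rfl fun r _ => Finset.sum_congr rfl fun s _ => ?_
    rw [mul_mul_mul_comm, ← Complex.exp_add]
    ring_nf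
  have hcont : ∀ (c k : ℂ), Continuous fun t : ℝ => Complex.exp (c * t) * k := by
    intro c k
    exact ((Complex.continuous_exp.comp (by continuity)).mul continuous_const)
  have hF : ∀ T : ℝ, (1 / T) *
      ∫ t in (0:ℝ)..T,
        (NormedSpace.exp ((t * Complex.I) • D.map Complex.ofReal) x y) *
        (NormedSpace.exp ((-(t * Complex.I)) • D.map Complex.ofReal) x y)
      = ∑ r, ∑ s, (1 / T) * (∫ t in (0:ℝ)..T,
          Complex.exp ((Complex.I * (lam r - lam s)) * t)) *
          (((E r x y : ℝ) : ℂ) * ((E s x y : ℝ) : ℂ)) := by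
    intro T
    rw [intervalIntegral.integral_congr (g := fun t => ∑ r, ∑ s,
        Complex.exp ((Complex.I * (lam r - lam s)) * t) *
          (((E r x y : ℝ) : ℂ) * ((E s x y : ℝ) : ℂ)))
        (fun t _ => hint t)]
    rw [integral_double_sum]
    rw [Finset.mul_sum]
    refine Finset.sum_congr rfl fun r _ => ?_
    rw [Finset.mul_sum]
    exact Finset.sum_congr rfl fun s _ => by ring
  simp only [hF]
  -- compute the limit of each term
  have hterm : ∀ r s : Fin m,
      Tendsto (fun T : ℝ => (1 / T) * (∫ t in (0:ℝ)..T,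
          Complex.exp ((Complex.I * (lam r - lam s)) * t)) *
          (((E r x y : ℝ) : ℂ) * ((E s x y : ℝ) : ℂ))) atTop
        (nhds (if r = s then (((E r x y : ℝ) : ℂ) * ((E s x y : ℝ) : ℂ)) else 0)) := by
    intro r s
    by_cases h : r = s
    · subst h
      simp only [if_pos rfl]
      have heq : (fun T : ℝ => (1 / (T:ℂ)) * (∫ t in (0:ℝ)..T,
          Complex.exp ((Complex.I * (lam r - lam r)) * t)) *
          (((E r x y : ℝ) : ℂ) * ((E r x y : ℝ) : ℂ)))
          =ᶠ[atTop] (fun _ => ((E r x y : ℝ) : ℂ) * ((E r x y : ℝ) : ℂ)) := by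
        filter_upwards [eventually_gt_atTop (0:ℝ)] with T hT
        have hT0 : (T : ℂ) ≠ 0 := by exact_mod_cast hT.ne'
        simp only [sub_self, Complex.ofReal_zero, mul_zero, zero_mul, Complex.exp_zero]
        rw [intervalIntegral.integral_const]
        simp only [sub_zero, smul_eq_mul, mul_one, Complex.real_smul]
        field_simp
      exact Tendsto.congr' heq.symm tendsto_const_nhds
    · rw [if_neg h]
      set c : ℂ := Complex.I * (lam r - lam s) with hc
      have hc0 : c ≠ 0 := by
        rw [hc]
        refine mul_ne_zero Complex.I_ne_zero ?_
        rw [sub_ne_zero]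
        exact fun hcon => h (hlam_inj (by exact_mod_cast hcon))
      have hintval : ∀ T : ℝ, (∫ t in (0:ℝ)..T, Complex.exp (c * t))
          = (Complex.exp (c * T) - 1) / c := by
        intro T
        rw [integral_exp_mul_complex hc0]
        simp
      have habs : ∀ T : ℝ, ‖Complex.exp (c * T)‖ = 1 := by
        intro T
        have hEq : c * T = (((lam r - lam s) * T : ℝ) : ℂ) * Complex.I := by
          rw [hc]; push_cast; ring
        rw [hEq, Complex.norm_exp_ofReal_mul_I]
      have hmain : Tendsto (fun T : ℝ => (1 / (T:ℂ)) * (∫ t in (0:ℝ)..T, Complex.exp (c * t)))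
          atTop (nhds 0) := by
        have hbound : ∀ᶠ T : ℝ in atTop,
            ‖(1 / (T:ℂ)) * (∫ t in (0:ℝ)..T, Complex.exp (c * t))‖ ≤ (2 / ‖c‖) * T⁻¹ := by
          filter_upwards [eventually_gt_atTop (0:ℝ)] with T hT
          rw [hintval T, norm_mul, norm_div, norm_div]
          have h1 : ‖(1:ℂ)‖ / ‖(T:ℂ)‖ = T⁻¹ := by
            rw [norm_one, Complex.norm_real, Real.norm_eq_abs, abs_of_pos hT, one_div]
          have h2 : ‖Complex.exp (c * T) - 1‖ ≤ 2 := by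
            calc ‖Complex.exp (c * T) - 1‖ ≤ ‖Complex.exp (c * T)‖ + ‖(1:ℂ)‖ :=
              norm_sub_le _ _
            _ = 2 := by rw [habs T, norm_one]; norm_num
          rw [h1, mul_comm]
          gcongr
        have htend : Tendsto (fun T : ℝ => (2 / ‖c‖) * T⁻¹) atTop (nhds 0) := by
          simpa using (tendsto_inv_atTop_zero (𝕜 := ℝ)).const_mul (2 / ‖c‖)
        exact squeeze_zero_norm' hbound htend
      have := hmain.mul_const (((E r x y : ℝ) : ℂ) * ((E s x y : ℝ) : ℂ))
      simpa using this
  have hlim := tendsto_finset_sum (Finset.univ : Finset (Fin m))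
    (fun r _ => tendsto_finset_sum (Finset.univ : Finset (Fin m)) (fun s _ => hterm r s))
  have hval : (∑ r : Fin m, ∑ s : Fin m,
      if r = s then (((E r x y : ℝ) : ℂ) * ((E s x y : ℝ) : ℂ)) else 0)
      = (((∑ r, (E r).hadamard (E r)) x y : ℝ) : ℂ) := by
    rw [Finset.sum_congr rfl (fun r _ => Finset.sum_ite_eq (Finset.univ : Finset (Fin m)) r
      (fun s => (((E r x y : ℝ) : ℂ) * ((E s x y : ℝ) : ℂ))))]
    simp only [Finset.mem_univ, if_pos]
    rw [Matrix.sum_apply]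
    push_cast
    refine Finset.sum_congr rfl fun r _ => ?_
    rw [Matrix.hadamard_apply]
    push_cast
    ring
  rw [← hval]
  exact hlim
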